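/- Suppose either (a) 1 < r ≤ 2 and e is a real random variable whose distribution is symmetric about 0 with E(|e|^r) < ∞, or (b) r = 2 and e is a real random variable with E(e) = 0 and E(e²) < ∞. Let a, b : ℝ^p → ℝ be Borel functions and a₀,…,a_p, b₀,…,b_p nonnegative constants such that |a(x)| ≤ a₀ + a₁|x₁| + ⋯ + a_p|x_p| and 0 ≤ b(x) ≤ (b₀² + b₁²x₁² + ⋯ + b_p²x_p²)^{1/2} for all x ∈ ℝ^p. Then for every δ > 0 there exists K < ∞ such that for every x = (x₁,…,x_p) ∈ ℝ^p, E(|a(x) + b(x)e|^r) ≤ K + Σ_{i=1}^p ((1+δ) a_i (Σ_{k=1}^p a_k)^{r−1} + b_i^r E(|e|^r)) |x_i|^r. -/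

import Mathlib

open MeasureTheory Finset

/-- Subadditivity of `t ↦ t^p` for `0 ≤ p ≤ 1`. -/
lemma my_rpow_add_le {x y p : ℝ} (hx : 0 ≤ x) (hy : 0 ≤ y) (hp : 0 ≤ p) (hp1 : p ≤ 1) :
    (x + y) ^ p ≤ x ^ p + y ^ p := by
  have h := NNReal.rpow_add_le_add_rpow x.toNNReal y.toNNReal hp hp1
  have := NNReal.coe_le_coe.2 h
  push_cast [NNReal.coe_rpow] at this
  rwa [Real.coe_toNNReal x hx, Real.coe_toNNReal y hy] at this

/-- two-point concavity -/
lemma my_concave {A B s : ℝ} (hA : 0 ≤ A) (hB : 0 ≤ B) (hs : 0 ≤ s) (hs1 : s ≤ 1) :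
    A ^ s + B ^ s ≤ 2 * ((A + B) / 2) ^ s := by
  have h := (Real.concaveOn_rpow hs hs1).2 (Set.mem_Ici.2 hA) (Set.mem_Ici.2 hB)
    (by norm_num : (0:ℝ) ≤ 1/2) (by norm_num : (0:ℝ) ≤ 1/2) (by norm_num)
  simp only [smul_eq_mul] at h
  have he : 1/2 * A + 1/2 * B = (A + B) / 2 := by ring
  rw [he] at h
  linarith

/-- |t|^r = (t^2)^(r/2) -/
lemma my_abs_rpow (t r : ℝ) : |t| ^ r = (t ^ 2) ^ (r / 2) := by
  rw [← sq_abs t, ← Real.rpow_natCast |t| 2, ← Real.rpow_mul (abs_nonneg t)]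
  push_cast
  rw [show (2:ℝ) * (r / 2) = r by ring]

/-- Clarkson-type inequality. -/
lemma my_clarkson {r : ℝ} (hr0 : 0 < r) (hr2 : r ≤ 2) (u v : ℝ) :
    |u + v| ^ r + |u - v| ^ r ≤ 2 * (|u| ^ r + |v| ^ r) := by
  have hs0 : 0 ≤ r / 2 := by linarith
  have hs1 : r / 2 ≤ 1 := by linarith
  rw [my_abs_rpow (u+v) r, my_abs_rpow (u-v) r, my_abs_rpow u r, my_abs_rpow v r]
  have h1 : ((u+v)^2) ^ (r/2) + ((u-v)^2) ^ (r/2)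
      ≤ 2 * (((u+v)^2 + (u-v)^2) / 2) ^ (r/2) := my_concave (sq_nonneg _) (sq_nonneg _) hs0 hs1
  have he : ((u+v)^2 + (u-v)^2) / 2 = u^2 + v^2 := by ring
  rw [he] at h1
  have h2 : (u^2 + v^2) ^ (r/2) ≤ (u^2) ^ (r/2) + (v^2) ^ (r/2) :=
    my_rpow_add_le (sq_nonneg _) (sq_nonneg _) hs0 hs1
  linarith

/-- Finite-sum subadditivity of `t ↦ t^s` for `0 < s ≤ 1`. -/
lemma my_sum_rpow_le {ι : Type*} (s : Finset ι) (f : ι → ℝ) {p : ℝ} (hp0 : 0 < p) (hp1 : p ≤ 1)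
    (hf : ∀ i ∈ s, 0 ≤ f i) : (∑ i ∈ s, f i) ^ p ≤ ∑ i ∈ s, f i ^ p := by
  classical
  induction s using Finset.induction with
  | empty => simp [Real.zero_rpow hp0.ne']
  | @insert j t hj ih =>
    rw [Finset.sum_insert hj, Finset.sum_insert hj]
    have h1 : (f j + ∑ i ∈ t, f i) ^ p ≤ f j ^ p + (∑ i ∈ t, f i) ^ p :=
      my_rpow_add_le (hf j (Finset.mem_insert_self _ _))
        (Finset.sum_nonneg fun i hi => hf i (Finset.mem_insert_of_mem hi)) hp0.le hp1
    have h2 := ih (fun i hi => hf i (Finset.mem_insert_of_mem hi))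
    linarith

/-- Jensen-type inequality: `(∑ Aᵢtᵢ)^r ≤ (∑ Aᵢ)^{r-1} ∑ Aᵢtᵢ^r`. -/
lemma my_jensen {ι : Type*} (s : Finset ι) (A t : ι → ℝ) {r : ℝ} (hr : 1 ≤ r)
    (hA : ∀ i ∈ s, 0 ≤ A i) (ht : ∀ i ∈ s, 0 ≤ t i) :
    (∑ i ∈ s, A i * t i) ^ r ≤ (∑ i ∈ s, A i) ^ (r - 1) * ∑ i ∈ s, A i * t i ^ r := by
  classical
  set T := ∑ i ∈ s, A i with hT
  have hT0 : 0 ≤ T := Finset.sum_nonneg hA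
  rcases eq_or_lt_of_le hT0 with h0 | hpos
  · -- all A i = 0
    have hall : ∀ i ∈ s, A i = 0 := by
      intro i hi
      exact (Finset.sum_eq_zero_iff_of_nonneg hA).1 h0.symm i hi
    have h1 : ∑ i ∈ s, A i * t i = 0 := Finset.sum_eq_zero fun i hi => by rw [hall i hi, zero_mul]
    have h2 : ∑ i ∈ s, A i * t i ^ r = 0 := Finset.sum_eq_zero fun i hi => by
      rw [hall i hi, zero_mul]
    rw [h1, h2, Real.zero_rpow (by positivity), mul_zero]
  · have hw : ∀ i ∈ s, 0 ≤ A i / T := fun i hi => div_nonneg (hA i hi) hT0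
    have hw1 : ∑ i ∈ s, A i / T = 1 := by
      rw [← Finset.sum_div, ← hT, div_self hpos.ne']
    have h := Real.rpow_arith_mean_le_arith_mean_rpow s (fun i => A i / T) t hw hw1 ht hr
    have hL : (∑ i ∈ s, A i / T * t i) = (∑ i ∈ s, A i * t i) / T := by
      simp only [div_mul_eq_mul_div, Finset.sum_div]
    have hR : (∑ i ∈ s, A i / T * t i ^ r) = (∑ i ∈ s, A i * t i ^ r) / T := by
      simp only [div_mul_eq_mul_div, Finset.sum_div]
    rw [hL, hR, Real.div_rpow (Finset.sum_nonneg fun i hi => mul_nonneg (hA i hi) (ht i hi)) hT0,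
      div_le_div_iff₀ (by positivity) hpos] at h
    calc (∑ i ∈ s, A i * t i) ^ r ≤ (∑ i ∈ s, A i * t i ^ r) / T * T ^ r := by
          rw [div_mul_eq_mul_div, le_div_iff₀ hpos]; linarith
      _ = T ^ (r - 1) * ∑ i ∈ s, A i * t i ^ r := by
          rw [Real.rpow_sub hpos, Real.rpow_one]
          field_simp

/-- Key moment inequality: `E|c + d·e|^r ≤ |c|^r + d^r E|e|^r`. -/
lemma my_key {Ω : Type*} [MeasurableSpace Ω] (μ : Measure Ω) [IsProbabilityMeasure μ]
    (r : ℝ) (e : Ω → ℝ) (he : Measurable e) (hmom : Integrable (fun ω => |e ω| ^ r) μ)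
    (hcase : (1 < r ∧ r ≤ 2 ∧ μ.map e = μ.map (fun ω => -e ω)) ∨
      (r = 2 ∧ ∫ ω, e ω ∂μ = 0))
    (c d : ℝ) (hd : 0 ≤ d) :
    ∫ ω, |c + d * e ω| ^ r ∂μ ≤ |c| ^ r + d ^ r * ∫ ω, |e ω| ^ r ∂μ := by
  rcases hcase with ⟨hr1, hr2, hsym⟩ | ⟨hr2, hmean⟩
  · -- symmetric case
    have hr0 : (0:ℝ) < r := by linarith
    -- pointwise bounds
    have hpt : ∀ t : ℝ, |c + d * t| ^ r + |c - d * t| ^ r ≤ 2 * (|c| ^ r + d ^ r * |t| ^ r) := by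
      intro t
      have := my_clarkson hr0 hr2 c (d * t)
      have habs : |d * t| ^ r = d ^ r * |t| ^ r := by
        rw [abs_mul, Real.mul_rpow (abs_nonneg d) (abs_nonneg t), abs_of_nonneg hd]
      rw [habs] at this
      exact this
    -- measurability of the two integrands
    have hc1 : Continuous fun t : ℝ => |c + d * t| ^ r :=
      (Real.continuous_rpow_const hr0.le).comp
        ((continuous_const.add (continuous_const.mul continuous_id)).abs)
    have hc2 : Continuous fun t : ℝ => |c - d * t| ^ r :=
      (Real.continuous_rpow_const hr0.le).comp
        ((continuous_const.sub (continuous_const.mul continuous_id)).abs)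
    have hms1 : AEStronglyMeasurable (fun ω => |c + d * e ω| ^ r) μ :=
      (hc1.measurable.comp he).aestronglyMeasurable
    have hms2 : AEStronglyMeasurable (fun ω => |c - d * e ω| ^ r) μ :=
      (hc2.measurable.comp he).aestronglyMeasurable
    have hgint : Integrable (fun ω => 2 * (|c| ^ r + d ^ r * |e ω| ^ r)) μ :=
      (((integrable_const (|c| ^ r)).add (hmom.const_mul (d ^ r))).const_mul 2)
    have hint1 : Integrable (fun ω => |c + d * e ω| ^ r) μ := by
      refine hgint.mono' hms1 (Filter.Eventually.of_forall fun ω => ?_)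
      rw [Real.norm_eq_abs, abs_of_nonneg (Real.rpow_nonneg (abs_nonneg _) r)]
      have h := hpt (e ω)
      have h2 : (0:ℝ) ≤ |c - d * e ω| ^ r := Real.rpow_nonneg (abs_nonneg _) r
      linarith
    have hint2 : Integrable (fun ω => |c - d * e ω| ^ r) μ := by
      refine hgint.mono' hms2 (Filter.Eventually.of_forall fun ω => ?_)
      rw [Real.norm_eq_abs, abs_of_nonneg (Real.rpow_nonneg (abs_nonneg _) r)]
      have h := hpt (e ω)
      have h2 : (0:ℝ) ≤ |c + d * e ω| ^ r := Real.rpow_nonneg (abs_nonneg _) r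
      linarith
    -- symmetry: ∫ |c - d e|^r = ∫ |c + d e|^r
    have hsymint : ∫ ω, |c - d * e ω| ^ r ∂μ = ∫ ω, |c + d * e ω| ^ r ∂μ := by
      have h1 : ∫ ω, |c + d * e ω| ^ r ∂μ = ∫ t, |c + d * t| ^ r ∂(μ.map e) :=
        (integral_map he.aemeasurable (hc1.measurable.aestronglyMeasurable)).symm
      have h2 : ∫ t, |c + d * t| ^ r ∂(μ.map e) = ∫ ω, |c + d * (-e ω)| ^ r ∂μ := by
        rw [hsym]
        exact integral_map he.neg.aemeasurable (hc1.measurable.aestronglyMeasurable)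
      have h3 : ∀ ω, |c + d * (-e ω)| ^ r = |c - d * e ω| ^ r := by
        intro ω; rw [mul_neg, ← sub_eq_add_neg]
      rw [h1, h2]
      exact (integral_congr_ae (Filter.Eventually.of_forall h3)).symm
    -- combine
    have hhalf : ∫ ω, |c + d * e ω| ^ r ∂μ
        = (1/2) * ∫ ω, (|c + d * e ω| ^ r + |c - d * e ω| ^ r) ∂μ := by
      rw [integral_add hint1 hint2, hsymint]; ring
    rw [hhalf]
    have hmono : ∫ ω, (|c + d * e ω| ^ r + |c - d * e ω| ^ r) ∂μ
        ≤ ∫ ω, 2 * (|c| ^ r + d ^ r * |e ω| ^ r) ∂μ :=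
      integral_mono (hint1.add hint2) hgint fun ω => hpt (e ω)
    have hi : Integrable (fun ω => d ^ r * |e ω| ^ r) μ := hmom.const_mul _
    have hrhs : ∫ ω, 2 * (|c| ^ r + d ^ r * |e ω| ^ r) ∂μ
        = 2 * (|c| ^ r + d ^ r * ∫ ω, |e ω| ^ r ∂μ) := by
      rw [integral_const_mul, integral_add (integrable_const _) hi,
        integral_const_mul, integral_const]
      simp
    rw [hrhs] at hmono
    linarith
  · -- mean-zero case, r = 2
    subst hr2
    have hd2 : ∀ t : ℝ, t ^ (2:ℝ) = t ^ 2 := fun t => by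
      rw [show (2:ℝ) = ((2:ℕ):ℝ) by norm_num, Real.rpow_natCast]
    simp only [hd2, sq_abs] at hmom ⊢
    have he2 : Integrable (fun ω => e ω ^ 2) μ := hmom
    have he1 : Integrable e μ := by
      refine ((integrable_const (1:ℝ)).add he2).mono' he.aestronglyMeasurable
        (Filter.Eventually.of_forall fun ω => ?_)
      simp only [Pi.add_apply, Real.norm_eq_abs]
      nlinarith [sq_nonneg (|e ω| - 1), abs_nonneg (e ω), sq_abs (e ω)]
    have hexp : ∀ ω, (c + d * e ω) ^ 2 = c ^ 2 + 2 * c * d * e ω + d ^ 2 * e ω ^ 2 := by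
      intro ω; ring
    calc ∫ ω, (c + d * e ω) ^ 2 ∂μ
        = ∫ ω, (c ^ 2 + 2 * c * d * e ω + d ^ 2 * e ω ^ 2) ∂μ :=
          integral_congr_ae (Filter.Eventually.of_forall fun ω => hexp ω)
      _ = c ^ 2 + (2 * c * d) * ∫ ω, e ω ∂μ + d ^ 2 * ∫ ω, e ω ^ 2 ∂μ := by
          have hi1 : Integrable (fun ω => c ^ 2 + 2 * c * d * e ω) μ :=
            (integrable_const _).add (he1.const_mul _)
          have hi2 : Integrable (fun ω => d ^ 2 * e ω ^ 2) μ := he2.const_mul _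
          rw [integral_add hi1 hi2,
            integral_add (integrable_const _) (he1.const_mul (2 * c * d)),
            integral_const_mul, integral_const_mul, integral_const]
          simp
      _ ≤ c ^ 2 + d ^ 2 * ∫ ω, e ω ^ 2 ∂μ := le_of_eq (by rw [hmean]; ring)

/-- Suppose either (a) `1 < r ≤ 2` and the law of `e` is symmetric about `0`
with `E(|e|^r) < ∞`, or (b) `r = 2`, `E(e) = 0` and `E(e²) < ∞`.  If
`|a(x)| ≤ a₀ + ∑ aᵢ|xᵢ|` and `0 ≤ b(x) ≤ (b₀² + ∑ bᵢ²xᵢ²)^{1/2}` with nonnegative constants,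
then for every `δ > 0` there is `K < ∞` such that for all `x`,
`E(|a(x)+b(x)e|^r) ≤ K + ∑ ((1+δ) aᵢ (∑ aₖ)^{r−1} + bᵢ^r E(|e|^r)) |xᵢ|^r`. -/
theorem stmt2 {Ω : Type*} [MeasurableSpace Ω] (μ : Measure Ω) [IsProbabilityMeasure μ]
    (p : ℕ) (hp : 1 ≤ p) (r : ℝ)
    (e : Ω → ℝ) (he : Measurable e) (hmom : Integrable (fun ω => |e ω| ^ r) μ)
    (hcase : (1 < r ∧ r ≤ 2 ∧ μ.map e = μ.map (fun ω => -e ω)) ∨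
      (r = 2 ∧ ∫ ω, e ω ∂μ = 0))
    (a b : (Fin p → ℝ) → ℝ) (ham : Measurable a) (hbm : Measurable b)
    (a₀ b₀ : ℝ) (A B : Fin p → ℝ)
    (ha₀ : 0 ≤ a₀) (hb₀ : 0 ≤ b₀) (hA : ∀ i, 0 ≤ A i) (hB : ∀ i, 0 ≤ B i)
    (habd : ∀ x, |a x| ≤ a₀ + ∑ i, A i * |x i|)
    (hb0 : ∀ x, 0 ≤ b x)
    (hbbd : ∀ x, b x ≤ Real.sqrt (b₀ ^ 2 + ∑ i, B i ^ 2 * x i ^ 2)) :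
    ∀ δ : ℝ, 0 < δ →
      ∃ K : ℝ, ∀ x : Fin p → ℝ,
        ∫ ω, |a x + b x * e ω| ^ r ∂μ
          ≤ K + ∑ i, ((1 + δ) * A i * (∑ k, A k) ^ (r - 1)
              + B i ^ r * ∫ ω, |e ω| ^ r ∂μ) * |x i| ^ r := by
  intro δ hδ
  have hr1 : 1 < r := by
    rcases hcase with ⟨h, _, _⟩ | ⟨h, _⟩
    · exact h
    · rw [h]; norm_num
  have hr2 : r ≤ 2 := by
    rcases hcase with ⟨_, h, _⟩ | ⟨h, _⟩
    · exact h
    · rw [h]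
  have hr0 : (0:ℝ) < r := by linarith
  set E := ∫ ω, |e ω| ^ r ∂μ with hEdef
  have hE : 0 ≤ E := integral_nonneg fun ω => Real.rpow_nonneg (abs_nonneg _) r
  set T := ∑ k, A k with hTdef
  have hT0 : 0 ≤ T := Finset.sum_nonneg fun i _ => hA i
  set cδ := (1 + δ) ^ (1 / r) with hcδdef
  have hc1 : 1 < cδ :=
    (Real.one_lt_rpow_iff_of_pos (by linarith)).2 (Or.inl ⟨by linarith, by positivity⟩)
  set M := a₀ / (cδ - 1) with hMdef
  have hM : 0 ≤ M := div_nonneg ha₀ (by linarith)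
  set K₁ := (a₀ + M) ^ r with hK₁def
  have hK₁ : 0 ≤ K₁ := Real.rpow_nonneg (by linarith) r
  refine ⟨K₁ + b₀ ^ r * E, fun x => ?_⟩
  set S := ∑ i, A i * |x i| with hSdef
  have hS0 : 0 ≤ S := Finset.sum_nonneg fun i _ => mul_nonneg (hA i) (abs_nonneg _)
  set SA := ∑ i, A i * |x i| ^ r with hSAdef
  have hSA0 : 0 ≤ SA :=
    Finset.sum_nonneg fun i _ => mul_nonneg (hA i) (Real.rpow_nonneg (abs_nonneg _) r)
  set SB := ∑ i, B i ^ r * |x i| ^ r with hSBdef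
  -- key probabilistic bound
  have h1 : ∫ ω, |a x + b x * e ω| ^ r ∂μ ≤ |a x| ^ r + (b x) ^ r * E :=
    my_key μ r e he hmom hcase (a x) (b x) (hb0 x)
  -- bound on |a x|^r
  have h2 : |a x| ^ r ≤ (a₀ + S) ^ r :=
    Real.rpow_le_rpow (abs_nonneg _) (habd x) hr0.le
  have h3 : (a₀ + S) ^ r ≤ K₁ + (1 + δ) * S ^ r := by
    rcases le_or_gt S M with hSM | hSM
    · have hle : (a₀ + S) ^ r ≤ K₁ :=
        Real.rpow_le_rpow (by linarith) (by linarith) hr0.le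
      have : 0 ≤ (1 + δ) * S ^ r :=
        mul_nonneg (by linarith) (Real.rpow_nonneg hS0 r)
      linarith
    · have ha' : a₀ ≤ S * (cδ - 1) := by
        have h := mul_le_mul_of_nonneg_right hSM.le (by linarith : (0:ℝ) ≤ cδ - 1)
        rwa [hMdef, div_mul_cancel₀ a₀ (by linarith : cδ - 1 ≠ 0)] at h
      have hle : a₀ + S ≤ cδ * S := by nlinarith
      have h4 : (a₀ + S) ^ r ≤ (cδ * S) ^ r :=
        Real.rpow_le_rpow (by linarith) hle hr0.le
      have h5 : (cδ * S) ^ r = (1 + δ) * S ^ r := by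
        rw [Real.mul_rpow (by positivity) hS0, hcδdef,
          ← Real.rpow_mul (by linarith : (0:ℝ) ≤ 1 + δ),
          one_div_mul_cancel hr0.ne', Real.rpow_one]
      rw [h5] at h4
      linarith
  have h4 : S ^ r ≤ T ^ (r - 1) * SA :=
    my_jensen Finset.univ A (fun i => |x i|) hr1.le (fun i _ => hA i)
      (fun i _ => abs_nonneg _)
  -- bound on (b x)^r
  have h5 : (b x) ^ r ≤ b₀ ^ r + SB := by
    set y := b₀ ^ 2 + ∑ i, B i ^ 2 * x i ^ 2 with hydef
    have hy0 : 0 ≤ y := add_nonneg (sq_nonneg _)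
      (Finset.sum_nonneg fun i _ => mul_nonneg (sq_nonneg _) (sq_nonneg _))
    have hs0 : (0:ℝ) < r / 2 := by linarith
    have hs1 : r / 2 ≤ 1 := by linarith
    have step1 : (b x) ^ r ≤ Real.sqrt y ^ r :=
      Real.rpow_le_rpow (hb0 x) (hbbd x) hr0.le
    have step2 : Real.sqrt y ^ r = y ^ (r / 2) := by
      rw [Real.sqrt_eq_rpow, ← Real.rpow_mul hy0]
      rw [show 1 / 2 * r = r / 2 by ring]
    have step3 : y ^ (r / 2) ≤ (b₀ ^ 2) ^ (r / 2) + (∑ i, B i ^ 2 * x i ^ 2) ^ (r / 2) :=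
      my_rpow_add_le (sq_nonneg _)
        (Finset.sum_nonneg fun i _ => mul_nonneg (sq_nonneg _) (sq_nonneg _)) hs0.le hs1
    have step4 : (∑ i, B i ^ 2 * x i ^ 2) ^ (r / 2) ≤ ∑ i, (B i ^ 2 * x i ^ 2) ^ (r / 2) :=
      my_sum_rpow_le Finset.univ _ hs0 hs1 fun i _ => mul_nonneg (sq_nonneg _) (sq_nonneg _)
    have step5 : (b₀ ^ 2) ^ (r / 2) = b₀ ^ r := by
      rw [← my_abs_rpow b₀ r, abs_of_nonneg hb₀]
    have step6 : ∀ i, (B i ^ 2 * x i ^ 2) ^ (r / 2) = B i ^ r * |x i| ^ r := by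
      intro i
      have hBx : B i ^ 2 * x i ^ 2 = (B i * |x i|) ^ 2 := by
        rw [mul_pow, sq_abs]
      rw [hBx, ← my_abs_rpow (B i * |x i|) r,
        abs_of_nonneg (mul_nonneg (hB i) (abs_nonneg _)),
        Real.mul_rpow (hB i) (abs_nonneg _)]
    have step7 : ∑ i, (B i ^ 2 * x i ^ 2) ^ (r / 2) = SB :=
      Finset.sum_congr rfl fun i _ => step6 i
    calc (b x) ^ r ≤ y ^ (r / 2) := by rw [← step2]; exact step1
      _ ≤ (b₀ ^ 2) ^ (r / 2) + (∑ i, B i ^ 2 * x i ^ 2) ^ (r / 2) := step3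
      _ ≤ b₀ ^ r + SB := by rw [step5]; rw [← step7]; linarith
  -- assemble
  have hsum : ∑ i, ((1 + δ) * A i * T ^ (r - 1) + B i ^ r * E) * |x i| ^ r
      = (1 + δ) * (T ^ (r - 1) * SA) + E * SB := by
    have hA' : (1 + δ) * (T ^ (r - 1) * SA) = ∑ i, (1 + δ) * (T ^ (r - 1) * (A i * |x i| ^ r)) := by
      rw [hSAdef, Finset.mul_sum, Finset.mul_sum]
    have hB' : E * SB = ∑ i, E * (B i ^ r * |x i| ^ r) := by
      rw [hSBdef, Finset.mul_sum]
    rw [hA', hB', ← Finset.sum_add_distrib]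
    exact Finset.sum_congr rfl fun i _ => by ring
  have ha' : |a x| ^ r ≤ K₁ + (1 + δ) * (T ^ (r - 1) * SA) := by
    have h6 : (1 + δ) * S ^ r ≤ (1 + δ) * (T ^ (r - 1) * SA) :=
      mul_le_mul_of_nonneg_left h4 (by linarith)
    linarith
  have hb' : (b x) ^ r * E ≤ b₀ ^ r * E + E * SB := by
    have := mul_le_mul_of_nonneg_right h5 hE
    rw [add_mul] at this
    linarith [this, mul_comm SB E]
  rw [hsum]
  linarith
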